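/- Let p ∈ ℝⁿ be nonzero. Then the coadjoint orbit of E(n) through (0,p), equipped with the subspace topology from so(n) × ℝⁿ, is homeomorphic to the set {(u,w) ∈ ℝⁿ × ℝⁿ : ‖u‖ = 1 and ⟨u,w⟩ = 0} (the tangent bundle of the unit sphere S^{n−1}, realized as a subspace of ℝⁿ × ℝⁿ). (This orbit is the manifold of oriented affine lines in ℝⁿ.) -/

import Mathlib

open Matrix

abbrev Mat (n : ℕ) := Matrix (Fin n) (Fin n) ℝ
abbrev Vec (n : ℕ) := Fin n → ℝ

/-- `r` is an orthogonal matrix. -/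
def IsOrth {n : ℕ} (r : Mat n) : Prop := r * rᵀ = 1 ∧ rᵀ * r = 1

/-- `ω` is skew-symmetric. -/
def IsSkew {n : ℕ} (ω : Mat n) : Prop := ωᵀ = -ω

/-- Adjoint action of `(r,d) ∈ E(n)` on `(ω,v) ∈ so(n) × ℝⁿ`. -/
noncomputable def Ad {n : ℕ} (r : Mat n) (d : Vec n) (ω : Mat n) (v : Vec n) :
    Mat n × Vec n :=
  (r * ω * r⁻¹, r *ᵥ v - (r * ω * r⁻¹) *ᵥ d)

/-- The momentum map `μ(p,d) = ½(p dᵀ − d pᵀ)`. -/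
noncomputable def mu {n : ℕ} (p d : Vec n) : Mat n :=
  (1/2 : ℝ) • (vecMulVec p d - vecMulVec d p)

/-- Coadjoint action of `(r,d) ∈ E(n)` on `(L,p) ∈ so(n)* × (ℝⁿ)* ≃ so(n) × ℝⁿ`. -/
noncomputable def CoAd {n : ℕ} (r : Mat n) (d : Vec n) (L : Mat n) (p : Vec n) :
    Mat n × Vec n :=
  (r * L * r⁻¹ + mu (r *ᵥ p) d, r *ᵥ p)

namespace Stmt17Aux

variable {n : ℕ}

lemma vmv_mulVec (a b x : Vec n) : vecMulVec a b *ᵥ x = (b ⬝ᵥ x) • a := by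
  ext i
  simp only [mulVec, vecMulVec_apply, dotProduct, Pi.smul_apply, smul_eq_mul, Finset.sum_mul]
  exact Finset.sum_congr rfl fun j _ => by ring

lemma vmv_transpose (a b : Vec n) : (vecMulVec a b)ᵀ = vecMulVec b a := by
  ext i j; simp [vecMulVec_apply, mul_comm]

lemma mu_mulVec (q d : Vec n) :
    mu q d *ᵥ q = ((1/2) * (d ⬝ᵥ q)) • q - ((1/2) * (q ⬝ᵥ q)) • d := by
  rw [mu, smul_mulVec, sub_mulVec, vmv_mulVec, vmv_mulVec, smul_sub, smul_smul, smul_smul]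

lemma dot_mu (q d : Vec n) : q ⬝ᵥ (mu q d *ᵥ q) = 0 := by
  rw [mu_mulVec, dotProduct_sub, dotProduct_smul, dotProduct_smul, dotProduct_comm q d]
  simp only [smul_eq_mul]; ring

lemma key (q d : Vec n) :
    vecMulVec (mu q d *ᵥ q) q - vecMulVec q (mu q d *ᵥ q) = (q ⬝ᵥ q) • mu q d := by
  ext i j
  rw [mu_mulVec]
  simp only [vecMulVec_apply, Matrix.sub_apply, Pi.sub_apply, Pi.smul_apply,
    Matrix.smul_apply, smul_eq_mul, mu]
  ring

lemma exists_orth (p q : Vec n) (h : q ⬝ᵥ q = p ⬝ᵥ p) :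
    ∃ r : Mat n, IsOrth r ∧ r *ᵥ p = q := by
  by_cases hpq : p = q
  · exact ⟨1, ⟨by simp, by simp⟩, by simp [hpq]⟩
  · set v : Vec n := p - q with hv
    have hvne : v ≠ 0 := sub_ne_zero.mpr hpq
    set s : ℝ := v ⬝ᵥ v with hs
    have hs0 : s ≠ 0 := fun h0 => hvne (dotProduct_self_eq_zero.mp h0)
    set W : Mat n := (2/s) • vecMulVec v v with hW
    have hVV : vecMulVec v v * vecMulVec v v = s • vecMulVec v v := by
      ext i j
      simp only [Matrix.mul_apply, vecMulVec_apply, Matrix.smul_apply, smul_eq_mul, hs,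
        dotProduct, Finset.sum_mul]
      exact Finset.sum_congr rfl fun k _ => by ring
    have hWW : W * W = W + W := by
      rw [hW, Matrix.smul_mul, Matrix.mul_smul, hVV, smul_smul, smul_smul,
        show (2/s)*(2/s)*s = (2/s) + (2/s) by field_simp; ring, add_smul]
    have hsym : (1 - W)ᵀ = 1 - W := by
      rw [transpose_sub, transpose_one, hW, transpose_smul, vmv_transpose]
    have hmul : (1 - W) * (1 - W) = 1 := by
      have : (1 - W) * (1 - W) = 1 - W - W + W * W := by noncomm_ring
      rw [this, hWW]; abel
    have hvp : s = 2 * (v ⬝ᵥ p) := by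
      simp only [hs, hv, dotProduct_sub, sub_dotProduct]
      rw [h, dotProduct_comm p q]; ring
    refine ⟨1 - W, ⟨by rw [hsym]; exact hmul, by rw [hsym]; exact hmul⟩, ?_⟩
    rw [sub_mulVec, one_mulVec, hW, smul_mulVec, vmv_mulVec, smul_smul,
      show (2/s) * (v ⬝ᵥ p) = 1 by rw [hvp]; rw [div_mul_eq_mul_div, div_eq_one_iff_eq (by rw [hvp] at hs0; exact hs0)], one_smul, hv]
    abel

lemma orth_dot (r : Mat n) (x : Vec n) (hr : rᵀ * r = 1) :
    (r *ᵥ x) ⬝ᵥ (r *ᵥ x) = x ⬝ᵥ x := by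
  rw [dotProduct_mulVec, ← mulVec_transpose, mulVec_mulVec, hr, one_mulVec]

end Stmt17Aux

set_option maxHeartbeats 1000000 in
open scoped RealInnerProductSpace in
/-- For nonzero `p`, the coadjoint orbit of `E(n)` through `(0,p)` is homeomorphic to the
tangent bundle of the unit sphere `S^{n-1} ⊂ ℝⁿ`. -/
theorem stmt17 {n : ℕ} (p : Vec n) (hp : p ≠ 0) :
    Nonempty
      (({x : Mat n × Vec n | ∃ (r : Mat n) (d : Vec n), IsOrth r ∧ CoAd r d 0 p = x}) ≃ₜ
       ({y : EuclideanSpace ℝ (Fin n) × EuclideanSpace ℝ (Fin n) |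
          ‖y.1‖ = 1 ∧ ⟪y.1, y.2⟫ = 0})) := by
  classical
  have hc : 0 < p ⬝ᵥ p := by
    rcases lt_or_eq_of_le (Finset.sum_nonneg fun i _ => mul_self_nonneg (p i) :
        (0:ℝ) ≤ p ⬝ᵥ p) with h | h
    · exact h
    · exact absurd (dotProduct_self_eq_zero.mp h.symm) hp
  obtain ⟨ρ, hρpos, hρ2⟩ : ∃ ρ : ℝ, 0 < ρ ∧ ρ * ρ = p ⬝ᵥ p :=
    ⟨Real.sqrt (p ⬝ᵥ p), Real.sqrt_pos.mpr hc, Real.mul_self_sqrt hc.le⟩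
  have hρ0 : ρ ≠ 0 := hρpos.ne'
  -- characterize the orbit
  have Achar : {x : Mat n × Vec n | ∃ (r : Mat n) (d : Vec n), IsOrth r ∧ CoAd r d 0 p = x}
      = {x : Mat n × Vec n | ∃ q d, q ⬝ᵥ q = p ⬝ᵥ p ∧ x = (mu q d, q)} := by
    ext x
    constructor
    · rintro ⟨r, d, hr, rfl⟩
      exact ⟨r *ᵥ p, d, Stmt17Aux.orth_dot r p hr.2, by simp [CoAd]⟩
    · rintro ⟨q, d, hq, rfl⟩
      obtain ⟨r, hr, hrp⟩ := Stmt17Aux.exists_orth p q hq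
      exact ⟨r, d, hr, by simp [CoAd, hrp]⟩
  rw [Achar]
  set e := EuclideanSpace.equiv (Fin n) ℝ with he
  have hinner : ∀ x y : EuclideanSpace ℝ (Fin n), (inner ℝ x y : ℝ) = (e x) ⬝ᵥ (e y) :=
    fun x y => by
      simp only [PiLp.inner_apply, dotProduct]
      exact Finset.sum_congr rfl fun i _ => by simp [he, mul_comm]
  have hnorm1 : ∀ x : EuclideanSpace ℝ (Fin n), ‖x‖ = 1 ↔ (inner ℝ x x : ℝ) = 1 := by
    intro x
    constructor
    · intro h; rw [real_inner_self_eq_norm_sq, h]; norm_num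
    · intro h
      have h2 : ‖x‖ ^ 2 = 1 := by rw [← real_inner_self_eq_norm_sq]; exact h
      nlinarith [norm_nonneg x]
  -- membership of the forward map
  have memF : ∀ x : Mat n × Vec n,
      x ∈ {x : Mat n × Vec n | ∃ q d, q ⬝ᵥ q = p ⬝ᵥ p ∧ x = (mu q d, q)} →
      (e.symm (ρ⁻¹ • x.2), e.symm (x.1 *ᵥ x.2)) ∈
        {y : EuclideanSpace ℝ (Fin n) × EuclideanSpace ℝ (Fin n) |
          ‖y.1‖ = 1 ∧ ⟪y.1, y.2⟫ = 0} := by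
    rintro x ⟨q, d, hq, rfl⟩
    constructor
    · rw [hnorm1, hinner, e.apply_symm_apply]
      show (ρ⁻¹ • q) ⬝ᵥ (ρ⁻¹ • q) = 1
      rw [smul_dotProduct, dotProduct_smul, hq, ← hρ2, smul_eq_mul, smul_eq_mul]
      field_simp
    · rw [hinner, e.apply_symm_apply, e.apply_symm_apply]
      show (ρ⁻¹ • q) ⬝ᵥ ((mu q d, q).1 *ᵥ q) = 0
      rw [smul_dotProduct]
      show ρ⁻¹ • (q ⬝ᵥ (mu q d *ᵥ q)) = 0
      rw [Stmt17Aux.dot_mu, smul_zero]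
  -- membership of the inverse map
  have memG : ∀ y : EuclideanSpace ℝ (Fin n) × EuclideanSpace ℝ (Fin n),
      y ∈ {y : EuclideanSpace ℝ (Fin n) × EuclideanSpace ℝ (Fin n) |
          ‖y.1‖ = 1 ∧ ⟪y.1, y.2⟫ = 0} →
      ((ρ⁻¹ • (vecMulVec (e y.2) (e y.1) - vecMulVec (e y.1) (e y.2)), ρ • (e y.1)) :
          Mat n × Vec n) ∈
        {x : Mat n × Vec n | ∃ q d, q ⬝ᵥ q = p ⬝ᵥ p ∧ x = (mu q d, q)} := by
    rintro y ⟨hy1, hy2⟩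
    have hu : (e y.1) ⬝ᵥ (e y.1) = 1 := by rw [← hinner, ← hnorm1]; exact hy1
    refine ⟨ρ • (e y.1), (-(2/(ρ*ρ))) • (e y.2), ?_, ?_⟩
    · rw [smul_dotProduct, dotProduct_smul, hu, smul_eq_mul, smul_eq_mul]
      rw [← hρ2]; ring
    · refine Prod.ext ?_ rfl
      show ρ⁻¹ • (vecMulVec (e y.2) (e y.1) - vecMulVec (e y.1) (e y.2))
          = mu (ρ • (e y.1)) ((-(2/(ρ*ρ))) • (e y.2))
      ext i j
      simp only [mu, Matrix.smul_apply, Matrix.sub_apply, vecMulVec_apply, Pi.smul_apply,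
        smul_eq_mul]
      field_simp
      ring
  refine ⟨⟨⟨fun x => ⟨(e.symm (ρ⁻¹ • (x : Mat n × Vec n).2),
                       e.symm ((x : Mat n × Vec n).1 *ᵥ (x : Mat n × Vec n).2)), memF _ x.2⟩,
      fun y => ⟨(ρ⁻¹ • (vecMulVec (e (y : EuclideanSpace ℝ (Fin n) × EuclideanSpace ℝ (Fin n)).2)
                          (e (y : EuclideanSpace ℝ (Fin n) × EuclideanSpace ℝ (Fin n)).1)
                  - vecMulVec (e (y : EuclideanSpace ℝ (Fin n) × EuclideanSpace ℝ (Fin n)).1)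
                      (e (y : EuclideanSpace ℝ (Fin n) × EuclideanSpace ℝ (Fin n)).2)),
                 ρ • (e (y : EuclideanSpace ℝ (Fin n) × EuclideanSpace ℝ (Fin n)).1)),
               memG _ y.2⟩, ?_, ?_⟩, ?_, ?_⟩⟩
  · -- left inverse
    rintro ⟨x, hx⟩
    obtain ⟨q, d, hq, rfl⟩ := hx
    apply Subtype.ext
    refine Prod.ext ?_ ?_
    · show ρ⁻¹ • (vecMulVec (e (e.symm ((mu q d, q).1 *ᵥ q))) (e (e.symm (ρ⁻¹ • q)))
          - vecMulVec (e (e.symm (ρ⁻¹ • q))) (e (e.symm ((mu q d, q).1 *ᵥ q)))) = mu q d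
      rw [e.apply_symm_apply, e.apply_symm_apply]
      show ρ⁻¹ • (vecMulVec (mu q d *ᵥ q) (ρ⁻¹ • q)
          - vecMulVec (ρ⁻¹ • q) (mu q d *ᵥ q)) = mu q d
      have h1 : vecMulVec (mu q d *ᵥ q) (ρ⁻¹ • q) = ρ⁻¹ • vecMulVec (mu q d *ᵥ q) q := by
        ext i j; simp [vecMulVec_apply]; ring
      have h2 : vecMulVec (ρ⁻¹ • q) (mu q d *ᵥ q) = ρ⁻¹ • vecMulVec q (mu q d *ᵥ q) := by
        ext i j; simp [vecMulVec_apply]; ring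
      rw [h1, h2, ← smul_sub, Stmt17Aux.key, hq, smul_smul, smul_smul, ← hρ2]
      rw [show ρ⁻¹ * ρ⁻¹ * (ρ * ρ) = 1 by field_simp]
      exact one_smul _ _
    · show ρ • (e (e.symm (ρ⁻¹ • q))) = q
      rw [e.apply_symm_apply, smul_smul, mul_inv_cancel₀ hρ0, one_smul]
  · -- right inverse
    rintro ⟨y, hy⟩
    have hu : (e y.1) ⬝ᵥ (e y.1) = 1 := by rw [← hinner, ← hnorm1]; exact hy.1
    have huw : (e y.1) ⬝ᵥ (e y.2) = 0 := by rw [← hinner]; exact hy.2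
    apply Subtype.ext
    refine Prod.ext ?_ ?_
    · show e.symm (ρ⁻¹ • (ρ • (e y.1))) = y.1
      rw [smul_smul, inv_mul_cancel₀ hρ0, one_smul]
      exact e.symm_apply_apply _
    · show e.symm ((ρ⁻¹ • (vecMulVec (e y.2) (e y.1) - vecMulVec (e y.1) (e y.2))) *ᵥ
          (ρ • (e y.1))) = y.2
      rw [Matrix.smul_mulVec, Matrix.mulVec_smul, Matrix.sub_mulVec,
        Stmt17Aux.vmv_mulVec, Stmt17Aux.vmv_mulVec, hu, dotProduct_comm (e y.2) (e y.1),
        huw, one_smul, zero_smul, sub_zero, smul_smul,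
        show ρ⁻¹ * ρ = 1 by field_simp, one_smul]
      exact e.symm_apply_apply _
  · -- continuity of toFun
    apply Continuous.subtype_mk
    have hmv : Continuous (fun x : Mat n × Vec n => x.1 *ᵥ x.2) := by
      apply continuous_pi
      intro i
      simp only [Matrix.mulVec, dotProduct]
      exact continuous_finset_sum _ fun j _ =>
        (((continuous_apply j).comp ((continuous_apply i).comp continuous_fst)).mul
          ((continuous_apply j).comp continuous_snd))
    exact ((e.symm.continuous.comp
        (((continuous_snd.comp continuous_subtype_val)).const_smul ρ⁻¹)).prodMk
      (e.symm.continuous.comp (hmv.comp continuous_subtype_val)))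
  · -- continuity of invFun
    apply Continuous.subtype_mk
    have hu : Continuous (fun y : {y : EuclideanSpace ℝ (Fin n) × EuclideanSpace ℝ (Fin n) |
          ‖y.1‖ = 1 ∧ ⟪y.1, y.2⟫ = 0} =>
        e (y : EuclideanSpace ℝ (Fin n) × EuclideanSpace ℝ (Fin n)).1) :=
      e.continuous.comp (continuous_fst.comp continuous_subtype_val)
    have hw : Continuous (fun y : {y : EuclideanSpace ℝ (Fin n) × EuclideanSpace ℝ (Fin n) |
          ‖y.1‖ = 1 ∧ ⟪y.1, y.2⟫ = 0} =>
        e (y : EuclideanSpace ℝ (Fin n) × EuclideanSpace ℝ (Fin n)).2) :=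
      e.continuous.comp (continuous_snd.comp continuous_subtype_val)
    have hvmv : ∀ (f g : {y : EuclideanSpace ℝ (Fin n) × EuclideanSpace ℝ (Fin n) |
          ‖y.1‖ = 1 ∧ ⟪y.1, y.2⟫ = 0} → Vec n), Continuous f → Continuous g →
        Continuous (fun y => vecMulVec (f y) (g y)) := by
      intro f g hf hg
      apply continuous_pi; intro i; apply continuous_pi; intro j
      simp only [vecMulVec_apply]
      exact ((continuous_apply i).comp hf).mul ((continuous_apply j).comp hg)
    exact (((hvmv _ _ hw hu).sub (hvmv _ _ hu hw)).const_smul ρ⁻¹).prodMk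
      (hu.const_smul ρ)
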